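/- Let Σ be the 0-1 square matrix of size K₋+M₋+l+M₊+K₊ with row blocks (K₋,M₋,l,M₊,K₊) and column blocks (M₋,K₋,l,K₊,M₊) given in block form by [[0,1_{K₋},0,0,0],[1_{M₋},0,0,0,0],[0,0,1_l,0,0],[0,0,0,0,1_{M₊}],[0,0,0,1_{K₊},0]], and let T be the 0-1 square matrix of size M₋+N₋+n+N₊+M₊ with row blocks (N₋,M₋,n,M₊,N₊) and column blocks (M₋,N₋,n,N₊,M₊) given by [[0,1_{N₋},0,0,0],[1_{M₋},0,0,0,0],[0,0,1_n,0,0],[0,0,0,0,1_{M₊}],[0,0,0,1_{N₊},0]]. Then (A⊛B)⁻¹ = Σ·(B⁻¹⊛A⁻¹)·T, where B⁻¹⊛A⁻¹ is formed with respect to the block structures of B⁻¹ (row blocks (K₋,l,K₊), column blocks (M₋,m,M₊)) and A⁻¹ (row blocks (M₋,m,M₊), column blocks (N₋,n,N₊)). In particular, the map induced by A ↦ A⁻¹ is an involution of the double-coset product: (𝔞⋆𝔟)* = 𝔟*⋆𝔞*. -/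

import Mathlib

namespace Neretin

open Matrix

/-- The product `A ⊛ B` of two block matrices, a representative of the product of
double cosets. Row blocks `(σ₁, ρ₁, s, ρ₃, σ₃)`, column blocks `(τ₁, σ₁, w, σ₃, τ₃)`,
regrouped as three blocks `(σ₁ ⊕ ρ₁, s, ρ₃ ⊕ σ₃)` and `(τ₁ ⊕ σ₁, w, σ₃ ⊕ τ₃)`. -/
def starMul {k : Type*} [Field k] {ρ₁ ρ₃ σ₁ σ₃ τ₁ τ₃ : Type*} {s t w : ℕ}
    (X : Matrix (ρ₁ ⊕ Fin s ⊕ ρ₃) (σ₁ ⊕ Fin t ⊕ σ₃) k)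
    (Y : Matrix (σ₁ ⊕ Fin t ⊕ σ₃) (τ₁ ⊕ Fin w ⊕ τ₃) k) :
    Matrix ((σ₁ ⊕ ρ₁) ⊕ Fin s ⊕ (ρ₃ ⊕ σ₃)) ((τ₁ ⊕ σ₁) ⊕ Fin w ⊕ (σ₃ ⊕ τ₃)) k :=
  Matrix.of fun r c =>
    match r, c with
    | Sum.inl (Sum.inl i), Sum.inl (Sum.inl j) => Y (Sum.inl i) (Sum.inl j)
    | Sum.inl (Sum.inl _), Sum.inl (Sum.inr _) => 0
    | Sum.inl (Sum.inl i), Sum.inr (Sum.inl j) => Y (Sum.inl i) (Sum.inr (Sum.inl j))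
    | Sum.inl (Sum.inl _), Sum.inr (Sum.inr (Sum.inl _)) => 0
    | Sum.inl (Sum.inl i), Sum.inr (Sum.inr (Sum.inr j)) => Y (Sum.inl i) (Sum.inr (Sum.inr j))
    | Sum.inl (Sum.inr i), Sum.inl (Sum.inl j) =>
        ∑ s', X (Sum.inl i) (Sum.inr (Sum.inl s')) * Y (Sum.inr (Sum.inl s')) (Sum.inl j)
    | Sum.inl (Sum.inr i), Sum.inl (Sum.inr j) => X (Sum.inl i) (Sum.inl j)
    | Sum.inl (Sum.inr i), Sum.inr (Sum.inl j) =>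
        ∑ s', X (Sum.inl i) (Sum.inr (Sum.inl s')) * Y (Sum.inr (Sum.inl s')) (Sum.inr (Sum.inl j))
    | Sum.inl (Sum.inr i), Sum.inr (Sum.inr (Sum.inl j)) => X (Sum.inl i) (Sum.inr (Sum.inr j))
    | Sum.inl (Sum.inr i), Sum.inr (Sum.inr (Sum.inr j)) =>
        ∑ s', X (Sum.inl i) (Sum.inr (Sum.inl s')) * Y (Sum.inr (Sum.inl s')) (Sum.inr (Sum.inr j))
    | Sum.inr (Sum.inl i), Sum.inl (Sum.inl j) =>
        ∑ s', X (Sum.inr (Sum.inl i)) (Sum.inr (Sum.inl s')) * Y (Sum.inr (Sum.inl s')) (Sum.inl j)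
    | Sum.inr (Sum.inl i), Sum.inl (Sum.inr j) => X (Sum.inr (Sum.inl i)) (Sum.inl j)
    | Sum.inr (Sum.inl i), Sum.inr (Sum.inl j) =>
        ∑ s', X (Sum.inr (Sum.inl i)) (Sum.inr (Sum.inl s')) * Y (Sum.inr (Sum.inl s')) (Sum.inr (Sum.inl j))
    | Sum.inr (Sum.inl i), Sum.inr (Sum.inr (Sum.inl j)) => X (Sum.inr (Sum.inl i)) (Sum.inr (Sum.inr j))
    | Sum.inr (Sum.inl i), Sum.inr (Sum.inr (Sum.inr j)) =>
        ∑ s', X (Sum.inr (Sum.inl i)) (Sum.inr (Sum.inl s')) * Y (Sum.inr (Sum.inl s')) (Sum.inr (Sum.inr j))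
    | Sum.inr (Sum.inr (Sum.inl i)), Sum.inl (Sum.inl j) =>
        ∑ s', X (Sum.inr (Sum.inr i)) (Sum.inr (Sum.inl s')) * Y (Sum.inr (Sum.inl s')) (Sum.inl j)
    | Sum.inr (Sum.inr (Sum.inl i)), Sum.inl (Sum.inr j) => X (Sum.inr (Sum.inr i)) (Sum.inl j)
    | Sum.inr (Sum.inr (Sum.inl i)), Sum.inr (Sum.inl j) =>
        ∑ s', X (Sum.inr (Sum.inr i)) (Sum.inr (Sum.inl s')) * Y (Sum.inr (Sum.inl s')) (Sum.inr (Sum.inl j))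
    | Sum.inr (Sum.inr (Sum.inl i)), Sum.inr (Sum.inr (Sum.inl j)) => X (Sum.inr (Sum.inr i)) (Sum.inr (Sum.inr j))
    | Sum.inr (Sum.inr (Sum.inl i)), Sum.inr (Sum.inr (Sum.inr j)) =>
        ∑ s', X (Sum.inr (Sum.inr i)) (Sum.inr (Sum.inl s')) * Y (Sum.inr (Sum.inl s')) (Sum.inr (Sum.inr j))
    | Sum.inr (Sum.inr (Sum.inr i)), Sum.inl (Sum.inl j) => Y (Sum.inr (Sum.inr i)) (Sum.inl j)
    | Sum.inr (Sum.inr (Sum.inr _)), Sum.inl (Sum.inr _) => 0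
    | Sum.inr (Sum.inr (Sum.inr i)), Sum.inr (Sum.inl j) => Y (Sum.inr (Sum.inr i)) (Sum.inr (Sum.inl j))
    | Sum.inr (Sum.inr (Sum.inr _)), Sum.inr (Sum.inr (Sum.inl _)) => 0
    | Sum.inr (Sum.inr (Sum.inr i)), Sum.inr (Sum.inr (Sum.inr j)) => Y (Sum.inr (Sum.inr i)) (Sum.inr (Sum.inr j))


/-- The 0-1 permutation matrix associated with a bijection of index sets. -/
def swapMat (k : Type*) [Field k] {α β : Type*} [DecidableEq β] (e : α ≃ β) :
    Matrix α β k :=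
  Matrix.of fun r c => if e r = c then 1 else 0

section Aux

variable {k : Type*} [Field k]

/-- Three-block diagonal extension of a matrix: identities on outer blocks `α`, `δ`. -/
def d3 {α β γ δ : Type*} [DecidableEq α] [DecidableEq δ] (X : Matrix β γ k) :
    Matrix (α ⊕ β ⊕ δ) (α ⊕ γ ⊕ δ) k :=
  Matrix.fromBlocks 1 0 0 (Matrix.fromBlocks X 0 0 1)

lemma d3_mul {α β γ δ ε : Type*} [DecidableEq α] [DecidableEq δ]
    [Fintype α] [Fintype γ] [Fintype δ]
    (X : Matrix β γ k) (Y : Matrix γ ε k) :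
    (d3 (α := α) (δ := δ) X) * d3 (α := α) (δ := δ) Y = d3 (α := α) (δ := δ) (X * Y) := by
  simp [d3, Matrix.fromBlocks_multiply]

lemma d3_one {α β δ : Type*} [DecidableEq α] [DecidableEq β] [DecidableEq δ] :
    (d3 (α := α) (δ := δ) (1 : Matrix β β k)) = 1 := by
  rw [d3, Matrix.fromBlocks_one, Matrix.fromBlocks_one]

/-- Regrouping equivalence. -/
def eQ (α β₁ β₂ β₃ δ : Type*) : (α ⊕ β₁) ⊕ (β₂ ⊕ (β₃ ⊕ δ)) ≃ α ⊕ ((β₁ ⊕ (β₂ ⊕ β₃)) ⊕ δ) where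
  toFun x := match x with
    | Sum.inl (Sum.inl a) => Sum.inl a
    | Sum.inl (Sum.inr b) => Sum.inr (Sum.inl (Sum.inl b))
    | Sum.inr (Sum.inl b) => Sum.inr (Sum.inl (Sum.inr (Sum.inl b)))
    | Sum.inr (Sum.inr (Sum.inl b)) => Sum.inr (Sum.inl (Sum.inr (Sum.inr b)))
    | Sum.inr (Sum.inr (Sum.inr d)) => Sum.inr (Sum.inr d)
  invFun x := match x with
    | Sum.inl a => Sum.inl (Sum.inl a)
    | Sum.inr (Sum.inl (Sum.inl b)) => Sum.inl (Sum.inr b)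
    | Sum.inr (Sum.inl (Sum.inr (Sum.inl b))) => Sum.inr (Sum.inl b)
    | Sum.inr (Sum.inl (Sum.inr (Sum.inr b))) => Sum.inr (Sum.inr (Sum.inl b))
    | Sum.inr (Sum.inr d) => Sum.inr (Sum.inr (Sum.inr d))
  left_inv := by rintro ((a | b) | (b | (b | d))) <;> rfl
  right_inv := by rintro (a | ((b | (b | b)) | d)) <;> rfl

/-- Twist involution swapping the outer blocks with the matching inner blocks. -/
def tw (α β δ : Type*) : α ⊕ ((α ⊕ (β ⊕ δ)) ⊕ δ) ≃ α ⊕ ((α ⊕ (β ⊕ δ)) ⊕ δ) where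
  toFun x := match x with
    | Sum.inl a => Sum.inr (Sum.inl (Sum.inl a))
    | Sum.inr (Sum.inl (Sum.inl a)) => Sum.inl a
    | Sum.inr (Sum.inl (Sum.inr (Sum.inl b))) => Sum.inr (Sum.inl (Sum.inr (Sum.inl b)))
    | Sum.inr (Sum.inl (Sum.inr (Sum.inr d))) => Sum.inr (Sum.inr d)
    | Sum.inr (Sum.inr d) => Sum.inr (Sum.inl (Sum.inr (Sum.inr d)))
  invFun x := match x with
    | Sum.inl a => Sum.inr (Sum.inl (Sum.inl a))
    | Sum.inr (Sum.inl (Sum.inl a)) => Sum.inl a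
    | Sum.inr (Sum.inl (Sum.inr (Sum.inl b))) => Sum.inr (Sum.inl (Sum.inr (Sum.inl b)))
    | Sum.inr (Sum.inl (Sum.inr (Sum.inr d))) => Sum.inr (Sum.inr d)
    | Sum.inr (Sum.inr d) => Sum.inr (Sum.inl (Sum.inr (Sum.inr d)))
  left_inv := by rintro (a | ((a | (b | d)) | d)) <;> rfl
  right_inv := by rintro (a | ((a | (b | d)) | d)) <;> rfl

lemma tw_tw {α β δ : Type*} (x : α ⊕ ((α ⊕ (β ⊕ δ)) ⊕ δ)) : tw α β δ (tw α β δ x) = x := by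
  rcases x with a | ((a | (b | d)) | d) <;> rfl

set_option maxHeartbeats 2000000 in
/-- `starMul` as a product of two permuted block-diagonal extensions. -/
lemma starMul_eq {ρ₁ ρ₃ σ₁ σ₃ τ₁ τ₃ : Type*} {s t w : ℕ}
    [Fintype σ₁] [Fintype σ₃] [DecidableEq σ₁] [DecidableEq σ₃]
    (X : Matrix (ρ₁ ⊕ Fin s ⊕ ρ₃) (σ₁ ⊕ Fin t ⊕ σ₃) k)
    (Y : Matrix (σ₁ ⊕ Fin t ⊕ σ₃) (τ₁ ⊕ Fin w ⊕ τ₃) k) :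
    starMul X Y =
      (d3 (α := σ₁) (δ := σ₃) X).submatrix (eQ σ₁ ρ₁ (Fin s) ρ₃ σ₃) _root_.id *
      (d3 (α := σ₁) (δ := σ₃) Y).submatrix (tw σ₁ (Fin t) σ₃)
        (((Equiv.sumCongr (Equiv.sumComm τ₁ σ₁)
            (Equiv.sumCongr (Equiv.refl (Fin w)) (Equiv.sumComm σ₃ τ₃))).trans
          (eQ σ₁ τ₁ (Fin w) τ₃ σ₃))) := by
  ext i j
  rcases i with (a | b) | (b | (b | d)) <;> rcases j with (a' | b') | (b' | (b' | d')) <;>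
    simp [starMul, d3, eQ, tw, Matrix.mul_apply, Fintype.sum_sum_type, Matrix.one_apply,
      Finset.sum_ite_eq, Finset.sum_ite_eq', Matrix.fromBlocks, Equiv.sumCongr, Equiv.sumComm]

end Aux

section Aux2

variable {k : Type*} [Field k]

lemma swapMat_mul {α β X : Type*} [Fintype β] [DecidableEq β] (e : α ≃ β)
    (M : Matrix β X k) : swapMat k e * M = M.submatrix ⇑e _root_.id := by
  ext i j
  simp [swapMat, Matrix.mul_apply, ite_mul, Finset.sum_ite_eq]

lemma mul_swapMat {α β X : Type*} [Fintype α] [DecidableEq α] [DecidableEq β]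
    (M : Matrix X α k) (e : α ≃ β) : M * swapMat k e = M.submatrix _root_.id ⇑e.symm := by
  ext i j
  simp only [swapMat, Matrix.mul_apply, Matrix.of_apply, mul_ite, mul_one, mul_zero,
    Matrix.submatrix_apply, ← Equiv.eq_symm_apply]
  simp [Finset.sum_ite_eq']

lemma one_submatrix_mul {β X Y : Type*} [Fintype β] [DecidableEq β] (e : Y → β)
    (M : Matrix β X k) :
    (1 : Matrix β β k).submatrix e _root_.id * M = M.submatrix e _root_.id := by
  ext i j
  simp [Matrix.mul_apply, Matrix.one_apply, ite_mul, Finset.sum_ite_eq]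

lemma one_submatrix_eq_swapMat {α β : Type*} [DecidableEq β] (e : α ≃ β) :
    (1 : Matrix β β k).submatrix ⇑e _root_.id = swapMat k e := by
  ext i j
  simp [swapMat, Matrix.one_apply]

end Aux2

/-- The inverse of `A ⊛ B` equals `Σ · (B⁻¹ ⊛ A⁻¹) · T`, where `Σ` and
`T` are the indicated 0-1 block permutation matrices; hence `(𝔞⋆𝔟)* = 𝔟*⋆𝔞*`. -/
theorem starMul_inverse (k : Type*) [Field k]
    (N₁ n N₂ M₁ m M₂ K₁ l K₂ : ℕ)
    (hNM : N₁ + n + N₂ = M₁ + m + M₂) (hMK : M₁ + m + M₂ = K₁ + l + K₂)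
    (A : Matrix (Fin N₁ ⊕ Fin n ⊕ Fin N₂) (Fin M₁ ⊕ Fin m ⊕ Fin M₂) k)
    (B : Matrix (Fin M₁ ⊕ Fin m ⊕ Fin M₂) (Fin K₁ ⊕ Fin l ⊕ Fin K₂) k)
    (A' : Matrix (Fin M₁ ⊕ Fin m ⊕ Fin M₂) (Fin N₁ ⊕ Fin n ⊕ Fin N₂) k)
    (B' : Matrix (Fin K₁ ⊕ Fin l ⊕ Fin K₂) (Fin M₁ ⊕ Fin m ⊕ Fin M₂) k)
    (hA : A * A' = 1 ∧ A' * A = 1) (hB : B * B' = 1 ∧ B' * B = 1) :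
    starMul A B *
      (swapMat k (Equiv.sumCongr (Equiv.sumComm (Fin K₁) (Fin M₁))
          (Equiv.sumCongr (Equiv.refl (Fin l)) (Equiv.sumComm (Fin M₂) (Fin K₂))))
        * starMul B' A' *
        swapMat k (Equiv.sumCongr (Equiv.sumComm (Fin N₁) (Fin M₁))
          (Equiv.sumCongr (Equiv.refl (Fin n)) (Equiv.sumComm (Fin M₂) (Fin N₂))))) = 1 ∧
    (swapMat k (Equiv.sumCongr (Equiv.sumComm (Fin K₁) (Fin M₁))
          (Equiv.sumCongr (Equiv.refl (Fin l)) (Equiv.sumComm (Fin M₂) (Fin K₂))))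
        * starMul B' A' *
        swapMat k (Equiv.sumCongr (Equiv.sumComm (Fin N₁) (Fin M₁))
          (Equiv.sumCongr (Equiv.refl (Fin n)) (Equiv.sumComm (Fin M₂) (Fin N₂)))))
      * starMul A B = 1 := by
  have eqAB := starMul_eq (k := k) A B
  have eqBA := starMul_eq (k := k) B' A'
  set e₁ := Equiv.sumCongr (Equiv.sumComm (Fin K₁) (Fin M₁))
      (Equiv.sumCongr (Equiv.refl (Fin l)) (Equiv.sumComm (Fin M₂) (Fin K₂))) with he₁
  set e₂ := Equiv.sumCongr (Equiv.sumComm (Fin N₁) (Fin M₁))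
      (Equiv.sumCongr (Equiv.refl (Fin n)) (Equiv.sumComm (Fin M₂) (Fin N₂))) with he₂
  set eA := eQ (Fin M₁) (Fin N₁) (Fin n) (Fin N₂) (Fin M₂) with heA
  set eB' := eQ (Fin M₁) (Fin K₁) (Fin l) (Fin K₂) (Fin M₂) with heB'
  set twM := tw (Fin M₁) (Fin m) (Fin M₂) with htwM
  set F1 := (d3 (α := Fin M₁) (δ := Fin M₂) A).submatrix ⇑eA _root_.id with hF1
  set F2 := (d3 (α := Fin M₁) (δ := Fin M₂) B).submatrix ⇑twM ⇑(e₁.trans eB') with hF2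
  set G1 := (d3 (α := Fin M₁) (δ := Fin M₂) B').submatrix ⇑eB' _root_.id with hG1
  set G2 := (d3 (α := Fin M₁) (δ := Fin M₂) A').submatrix ⇑twM ⇑(e₂.trans eA) with hG2
  have hS : swapMat k e₁ * G1
      = (d3 (α := Fin M₁) (δ := Fin M₂) B').submatrix ⇑(e₁.trans eB') _root_.id := by
    rw [hG1, swapMat_mul, Matrix.submatrix_submatrix]
    rfl
  have hT : G2 * swapMat k e₂
      = (d3 (α := Fin M₁) (δ := Fin M₂) A').submatrix ⇑twM ⇑eA := by
    rw [hG2, mul_swapMat, Matrix.submatrix_submatrix]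
    have hc : ⇑(e₂.trans eA) ∘ ⇑e₂.symm = ⇑eA := by
      funext x
      simp
    rw [hc, Function.comp_id]
  have hBB : F2 * (d3 (α := Fin M₁) (δ := Fin M₂) B').submatrix ⇑(e₁.trans eB') _root_.id
      = (1 : Matrix (Fin M₁ ⊕ (Fin M₁ ⊕ Fin m ⊕ Fin M₂) ⊕ Fin M₂) (Fin M₁ ⊕ (Fin M₁ ⊕ Fin m ⊕ Fin M₂) ⊕ Fin M₂) k).submatrix
          ⇑twM _root_.id := by
    rw [hF2, Matrix.submatrix_mul_equiv, d3_mul, hB.1, d3_one]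
  have hW : (1 : Matrix (Fin M₁ ⊕ (Fin M₁ ⊕ Fin m ⊕ Fin M₂) ⊕ Fin M₂) (Fin M₁ ⊕ (Fin M₁ ⊕ Fin m ⊕ Fin M₂) ⊕ Fin M₂) k).submatrix
        ⇑twM _root_.id *
      (d3 (α := Fin M₁) (δ := Fin M₂) A').submatrix ⇑twM ⇑eA
      = (d3 (α := Fin M₁) (δ := Fin M₂) A').submatrix _root_.id ⇑eA := by
    rw [one_submatrix_mul, Matrix.submatrix_submatrix]
    have hc : ⇑twM ∘ ⇑twM = _root_.id := funext fun x => tw_tw x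
    rw [hc, Function.comp_id]
  have hfinal : F1 * (d3 (α := Fin M₁) (δ := Fin M₂) A').submatrix _root_.id ⇑eA = 1 := by
    have e0 := Matrix.submatrix_mul_equiv (d3 (α := Fin M₁) (δ := Fin M₂) A)
      (d3 (α := Fin M₁) (δ := Fin M₂) A') ⇑eA (Equiv.refl _) ⇑eA
    rw [Equiv.coe_refl] at e0
    rw [hF1, e0, d3_mul, hA.1, d3_one, Matrix.submatrix_one_equiv]
  have hmid : (d3 (α := Fin M₁) (δ := Fin M₂) A').submatrix ⇑twM ⇑eA * F1
      = (1 : Matrix (Fin M₁ ⊕ (Fin M₁ ⊕ Fin m ⊕ Fin M₂) ⊕ Fin M₂) (Fin M₁ ⊕ (Fin M₁ ⊕ Fin m ⊕ Fin M₂) ⊕ Fin M₂) k).submatrix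
          ⇑twM _root_.id := by
    rw [hF1, Matrix.submatrix_mul_equiv, d3_mul, hA.2, d3_one]
  have hlast : (d3 (α := Fin M₁) (δ := Fin M₂) B').submatrix ⇑(e₁.trans eB') _root_.id *
      (1 : Matrix (Fin M₁ ⊕ (Fin M₁ ⊕ Fin m ⊕ Fin M₂) ⊕ Fin M₂) (Fin M₁ ⊕ (Fin M₁ ⊕ Fin m ⊕ Fin M₂) ⊕ Fin M₂) k).submatrix
          ⇑twM _root_.id
      = (d3 (α := Fin M₁) (δ := Fin M₂) B').submatrix ⇑(e₁.trans eB') ⇑twM := by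
    rw [one_submatrix_eq_swapMat, mul_swapMat, Matrix.submatrix_submatrix]
    have hc : _root_.id ∘ ⇑twM.symm = ⇑twM := by
      funext x
      simp only [Function.comp_apply, id_eq]
      rw [Equiv.symm_apply_eq]
      exact (tw_tw x).symm
    rw [hc, Function.comp_id]
  have hfin2 : (d3 (α := Fin M₁) (δ := Fin M₂) B').submatrix ⇑(e₁.trans eB') ⇑twM * F2
      = 1 := by
    rw [hF2, Matrix.submatrix_mul_equiv, d3_mul, hB.2, d3_one, Matrix.submatrix_one_equiv]
  constructor
  · rw [eqAB, eqBA]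
    calc F1 * F2 * (swapMat k e₁ * (G1 * G2) * swapMat k e₂)
        = F1 * ((F2 * (swapMat k e₁ * G1)) * (G2 * swapMat k e₂)) := by
          simp only [Matrix.mul_assoc]
      _ = 1 := by rw [hS, hT, hBB, hW, hfinal]
  · rw [eqAB, eqBA]
    calc swapMat k e₁ * (G1 * G2) * swapMat k e₂ * (F1 * F2)
        = (swapMat k e₁ * G1) * (((G2 * swapMat k e₂) * F1) * F2) := by
          simp only [Matrix.mul_assoc]
      _ = 1 := by
          rw [hS, hT, hmid, ← Matrix.mul_assoc, hlast, hfin2]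

end Neretin
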